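/- Error-free tracking under matched initial conditions: let V ∈ ℂ^{n×r} solve M V S_v² + D V S_v + K V = B R. If q : ℝ → ℂⁿ solves M q̈ + D q̇ + K q = B R e^{S_v t} q_{r,0} with initial conditions q(0) = V q_{r,0} and q̇(0) = V S_v q_{r,0}, and the homogeneous second-order system M ẍ + D ẋ + K x = 0 with zero initial conditions x(0) = 0, ẋ(0) = 0 has only the trivial solution, then q(t) = V e^{S_v t} q_{r,0} for all t, and hence the output satisfies C q(t) = C V e^{S_v t} q_{r,0} for all t. -/

import Mathlib

open Matrix NormedSpace

/-- error-free tracking under matched initial conditions. If `V`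
solves `M V S_v² + D V S_v + K V = B R`, `q` solves
`M q̈ + D q̇ + K q = B R e^{S_v t} q_{r,0}` with `q(0) = V q_{r,0}`,
`q̇(0) = V S_v q_{r,0}`, and the homogeneous system with zero initial data has
only the trivial solution, then `q(t) = V e^{S_v t} q_{r,0}` and hence
`C q(t) = C V e^{S_v t} q_{r,0}` for all `t`. -/
theorem stmt17 {n m p r : ℕ} (M D K : Matrix (Fin n) (Fin n) ℂ)
    (B : Matrix (Fin n) (Fin m) ℂ) (C : Matrix (Fin p) (Fin n) ℂ)
    (Sv : Matrix (Fin r) (Fin r) ℂ) (R : Matrix (Fin m) (Fin r) ℂ)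
    (V : Matrix (Fin n) (Fin r) ℂ) (qr0 : Fin r → ℂ)
    (hM : IsUnit M)
    (hSylv : M * V * Sv ^ 2 + D * V * Sv + K * V = B * R)
    (q q' q'' : ℝ → Fin n → ℂ)
    (hq : ∀ t, HasDerivAt q (q' t) t) (hq' : ∀ t, HasDerivAt q' (q'' t) t)
    (hODE : ∀ t : ℝ, M *ᵥ q'' t + D *ᵥ q' t + K *ᵥ q t
      = B *ᵥ (R *ᵥ (exp (t • Sv) *ᵥ qr0)))
    (hIC0 : q 0 = V *ᵥ qr0) (hIC1 : q' 0 = V *ᵥ (Sv *ᵥ qr0))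
    (huniq : ∀ x x' x'' : ℝ → Fin n → ℂ,
      (∀ t, HasDerivAt x (x' t) t) → (∀ t, HasDerivAt x' (x'' t) t) →
      (∀ t : ℝ, M *ᵥ x'' t + D *ᵥ x' t + K *ᵥ x t = 0) →
      x 0 = 0 → x' 0 = 0 → ∀ t, x t = 0) :
    ∀ t : ℝ, q t = V *ᵥ (exp (t • Sv) *ᵥ qr0) ∧
      C *ᵥ q t = (C * V) *ᵥ (exp (t • Sv) *ᵥ qr0) := by
  letI : SeminormedRing (Matrix (Fin r) (Fin r) ℂ) := Matrix.linftyOpSemiNormedRing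
  letI : NormedRing (Matrix (Fin r) (Fin r) ℂ) := Matrix.linftyOpNormedRing
  letI : NormedAlgebra ℝ (Matrix (Fin r) (Fin r) ℂ) := Matrix.linftyOpNormedAlgebra
  -- notation for the matrix exponential
  set E : ℝ → Matrix (Fin r) (Fin r) ℂ := fun t => exp (t • Sv) with hE
  -- derivative of the matrix exponential
  have hEderiv : ∀ t : ℝ, HasDerivAt E (E t * Sv) t := by
    intro t
    have h := hasDerivAt_exp_smul_const (𝕂 := ℝ) Sv t
    exact h
  -- derivative of `t ↦ E t *ᵥ v`
  have hEv : ∀ (v : Fin r → ℂ) (t : ℝ),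
      HasDerivAt (fun s => E s *ᵥ v) (E t *ᵥ (Sv *ᵥ v)) t := by
    intro v t
    let L : Matrix (Fin r) (Fin r) ℂ →ₗ[ℂ] (Fin r → ℂ) :=
      { toFun := fun X => X *ᵥ v
        map_add' := fun X Y => Matrix.add_mulVec X Y v
        map_smul' := fun c X => Matrix.smul_mulVec c X v }
    have hL : HasDerivAt (fun s => L (E s)) (L (E t * Sv)) t :=
      ((L.toContinuousLinearMap.restrictScalars ℝ).hasFDerivAt.comp_hasDerivAt t (hEderiv t))
    simpa [L, Matrix.mulVec_mulVec] using hL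
  -- derivative of `t ↦ V *ᵥ (E t *ᵥ v)`
  have hVf : ∀ (v : Fin r → ℂ) (t : ℝ),
      HasDerivAt (fun s => V *ᵥ (E s *ᵥ v)) (V *ᵥ (E t *ᵥ (Sv *ᵥ v))) t := by
    intro v t
    have := ((Matrix.mulVecLin V).toContinuousLinearMap.restrictScalars
      ℝ).hasFDerivAt.comp_hasDerivAt t (hEv v t)
    simpa [Function.comp_def, Matrix.mulVec_mulVec] using this
  -- the reference trajectory and its derivatives
  set f : ℝ → Fin n → ℂ := fun t => V *ᵥ (E t *ᵥ qr0) with hf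
  set f' : ℝ → Fin n → ℂ := fun t => V *ᵥ (E t *ᵥ (Sv *ᵥ qr0)) with hf'
  set f'' : ℝ → Fin n → ℂ := fun t => V *ᵥ (E t *ᵥ (Sv *ᵥ (Sv *ᵥ qr0))) with hf''
  have hfd : ∀ t, HasDerivAt f (f' t) t := fun t => hVf qr0 t
  have hfd' : ∀ t, HasDerivAt f' (f'' t) t := fun t => hVf (Sv *ᵥ qr0) t
  -- Sv commutes with E t
  have hcomm : ∀ t : ℝ, Sv * E t = E t * Sv := by
    intro t
    exact (((Commute.refl Sv).smul_right t).exp_right).eq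
  have hc : ∀ t : ℝ, Commute Sv (E t) := fun t =>
    ((Commute.refl Sv).smul_right t).exp_right
  -- the difference solves the homogeneous equation
  have hx : ∀ t, q t - f t = 0 := by
    apply huniq (fun t => q t - f t) (fun t => q' t - f' t) (fun t => q'' t - f'' t)
    · exact fun t => (hq t).sub (hfd t)
    · exact fun t => (hq' t).sub (hfd' t)
    · intro t
      have key : M *ᵥ f'' t + D *ᵥ f' t + K *ᵥ f t
          = B *ᵥ (R *ᵥ (E t *ᵥ qr0)) := by
        have hmat : M * (V * (E t * (Sv * Sv))) + D * (V * (E t * Sv)) + K * (V * E t)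
            = B * (R * E t) := by
          rw [(((hc t).mul_left (hc t)).eq).symm, ← hcomm t,
            ← Matrix.mul_assoc B R (E t), ← hSylv]
          simp only [Matrix.add_mul, Matrix.mul_assoc, sq]
        simp only [hf, hf', hf'', Matrix.mulVec_mulVec]
        rw [← Matrix.add_mulVec, ← Matrix.add_mulVec, hmat]
      have expand2 : M *ᵥ (q'' t - f'' t) + D *ᵥ (q' t - f' t) + K *ᵥ (q t - f t)
          = (M *ᵥ q'' t + D *ᵥ q' t + K *ᵥ q t)
            - (M *ᵥ f'' t + D *ᵥ f' t + K *ᵥ f t) := by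
        simp only [Matrix.mulVec_sub]
        abel
      rw [expand2, hODE t, key, sub_self]
    · simp [hf, hE, hIC0]
    · simp [hf', hE, hIC1]
  intro t
  have hq_eq : q t = V *ᵥ (E t *ᵥ qr0) := sub_eq_zero.mp (hx t)
  refine ⟨hq_eq, ?_⟩
  rw [hq_eq, Matrix.mulVec_mulVec]
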